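/- Suppose L₀ is a sequential contraction of L. If L is solvable then L₀ is solvable; moreover the solvability rank does not increase, in the precise form: for every l : ℕ, if LieAlgebra.derivedSeries ℝ L l = ⊥ then LieAlgebra.derivedSeries ℝ L₀ l = ⊥. -/

import Mathlib

open Filter Module

/-- `L₀` is a sequential contraction of the real Lie algebra `L`: there is a sequence of
real-linear equivalences `T p : L ≃ₗ[ℝ] L₀` such that the transported brackets converge to the
bracket of `L₀`. -/
def IsSequentialContraction (L L₀ : Type*) [LieRing L] [LieAlgebra ℝ L]
    [LieRing L₀] [LieAlgebra ℝ L₀] [TopologicalSpace L₀] : Prop :=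
  ∃ T : ℕ → (L ≃ₗ[ℝ] L₀), ∀ x y : L₀,
    Tendsto (fun p => T p ⁅(T p).symm x, (T p).symm y⁆) atTop (nhds ⁅x, y⁆)

/-- Pointwise convergence of bilinear maps on a finite-dimensional space upgrades to convergence
along converging arguments. -/
lemma bilin_tendsto {L₀ : Type*} [AddCommGroup L₀] [Module ℝ L₀] [Module.Finite ℝ L₀]
    [TopologicalSpace L₀] [IsTopologicalAddGroup L₀] [ContinuousSMul ℝ L₀] [T2Space L₀]
    (B : ℕ → L₀ →ₗ[ℝ] L₀ →ₗ[ℝ] L₀) (C : L₀ →ₗ[ℝ] L₀ →ₗ[ℝ] L₀)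
    (hB : ∀ x y, Tendsto (fun p => B p x y) atTop (nhds (C x y)))
    {u v : ℕ → L₀} {a b : L₀} (hu : Tendsto u atTop (nhds a))
    (hv : Tendsto v atTop (nhds b)) :
    Tendsto (fun p => B p (u p) (v p)) atTop (nhds (C a b)) := by
  let e := Module.finBasis ℝ L₀
  have key : ∀ (D : L₀ →ₗ[ℝ] L₀ →ₗ[ℝ] L₀) (x y : L₀),
      D x y = ∑ i, ∑ j, (e.repr x i * e.repr y j) • D (e i) (e j) := by
    intro D x y
    conv_lhs => rw [← e.sum_repr x, ← e.sum_repr y]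
    simp only [map_sum, map_smul, LinearMap.coe_sum, Finset.sum_apply,
      LinearMap.smul_apply, Finset.smul_sum, smul_smul]
    rw [Finset.sum_comm]
    simp_rw [mul_comm]
  have hrw : (fun p => B p (u p) (v p)) =
      fun p => ∑ i, ∑ j, (e.repr (u p) i * e.repr (v p) j) • B p (e i) (e j) := by
    funext p; exact key _ _ _
  rw [hrw, key C a b]
  refine tendsto_finset_sum _ fun i _ => tendsto_finset_sum _ fun j _ => ?_
  have hcont : ∀ i, Continuous fun x : L₀ => e.repr x i := by
    intro i
    have := (e.coord i).continuous_of_finiteDimensional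
    exact this
  exact ((((hcont i).tendsto a).comp hu).mul (((hcont j).tendsto b).comp hv)).smul
    (hB (e i) (e j))

/-- Under a sequential contraction, solvability is preserved and the solvability rank does not
increase. -/
theorem solvable_of_contraction {L L₀ : Type*} [LieRing L] [LieAlgebra ℝ L] [LieRing L₀] [LieAlgebra ℝ L₀]
    [Module.Finite ℝ L] [Module.Finite ℝ L₀]
    [TopologicalSpace L₀] [IsTopologicalAddGroup L₀] [ContinuousSMul ℝ L₀] [T2Space L₀]
    (h : IsSequentialContraction L L₀) :
    (LieAlgebra.IsSolvable L → LieAlgebra.IsSolvable L₀) ∧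
    (∀ l : ℕ, LieAlgebra.derivedSeries ℝ L l = ⊥ → LieAlgebra.derivedSeries ℝ L₀ l = ⊥) := by
  obtain ⟨T, hT⟩ := h
  -- the transported brackets as bilinear maps
  let B : ℕ → L₀ →ₗ[ℝ] L₀ →ₗ[ℝ] L₀ := fun p => LinearMap.mk₂ ℝ
    (fun x y => T p ⁅(T p).symm x, (T p).symm y⁆)
    (by intros; simp [add_lie]) (by intros; simp [smul_lie])
    (by intros; simp [lie_add]) (by intros; simp [lie_smul])
  let C : L₀ →ₗ[ℝ] L₀ →ₗ[ℝ] L₀ := LinearMap.mk₂ ℝ (fun x y => ⁅x, y⁆)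
    add_lie smul_lie lie_add lie_smul
  have hBC : ∀ x y : L₀, Tendsto (fun p => B p x y) atTop (nhds (C x y)) := fun x y => hT x y
  have main : ∀ l, ∀ x ∈ LieAlgebra.derivedSeries ℝ L₀ l, ∃ w : ℕ → L₀,
      (∀ p, (T p).symm (w p) ∈ LieAlgebra.derivedSeries ℝ L l) ∧ Tendsto w atTop (nhds x) := by
    intro l
    induction l with
    | zero =>
      intro x _
      exact ⟨fun _ => x, fun p => LieSubmodule.mem_top _, tendsto_const_nhds⟩
    | succ l ih =>
      intro x hx
      rw [LieAlgebra.derivedSeries_def, LieAlgebra.derivedSeriesOfIdeal_succ] at hx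
      rw [← LieSubmodule.mem_toSubmodule, LieSubmodule.lieIdeal_oper_eq_linear_span'] at hx
      refine Submodule.span_induction
        (p := fun m _ => ∃ w : ℕ → L₀,
          (∀ p, (T p).symm (w p) ∈ LieAlgebra.derivedSeries ℝ L (l + 1)) ∧
          Tendsto w atTop (nhds m)) ?_ ?_ ?_ ?_ hx
      · rintro m ⟨a, ha, b, hb, rfl⟩
        obtain ⟨wa, hwa, hwa'⟩ := ih a ha
        obtain ⟨wb, hwb, hwb'⟩ := ih b hb
        refine ⟨fun p => T p ⁅(T p).symm (wa p), (T p).symm (wb p)⁆, fun p => ?_, ?_⟩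
        · rw [LinearEquiv.symm_apply_apply, LieAlgebra.derivedSeries_def, LieAlgebra.derivedSeriesOfIdeal_succ]
          exact LieSubmodule.lie_mem_lie (hwa p) (hwb p)
        · exact bilin_tendsto B C hBC hwa' hwb'
      · exact ⟨fun _ => 0, fun p => by simp, tendsto_const_nhds⟩
      · rintro y z _ _ ⟨wy, h1, h2⟩ ⟨wz, h3, h4⟩
        refine ⟨wy + wz, fun p => ?_, h2.add h4⟩
        simpa using (LieAlgebra.derivedSeries ℝ L (l + 1)).add_mem (h1 p) (h3 p)
      · rintro t y _ ⟨wy, h1, h2⟩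
        refine ⟨t • wy, fun p => ?_, h2.const_smul t⟩
        simpa using (LieAlgebra.derivedSeries ℝ L (l + 1)).smul_mem t (h1 p)
  have key2 : ∀ l, LieAlgebra.derivedSeries ℝ L l = ⊥ → LieAlgebra.derivedSeries ℝ L₀ l = ⊥ := by
    intro l hl
    rw [LieSubmodule.eq_bot_iff]
    intro x hx
    obtain ⟨w, hw, hw'⟩ := main l x hx
    have hz : w = fun _ => (0 : L₀) := by
      funext p
      have h1 := hw p
      rw [hl, LieSubmodule.mem_bot] at h1
      have : w p = T p ((T p).symm (w p)) := (LinearEquiv.apply_symm_apply _ _).symm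
      rw [this, h1, map_zero]
    rw [hz] at hw'
    exact tendsto_nhds_unique hw' tendsto_const_nhds
  refine ⟨fun hs => ?_, key2⟩
  obtain ⟨k, hk⟩ := (LieAlgebra.isSolvable_iff ℝ L).mp hs
  exact (LieAlgebra.isSolvable_iff ℝ L₀).mpr ⟨k, key2 k hk⟩
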